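/- Suppose 0 < θ < 1, δᵢ ∈ {1,-1} for i = 1,...,n, and 0 ≤ x₁ ≤ x₂ ≤ ... ≤ xₙ ≤ 1 satisfy δₙxₙᵏ + δ_{n-1}x_{n-1}ᵏ + ... + δ₁x₁ᵏ = θ for all 1 ≤ k ≤ n. Then δᵢ = (-1)^{n-i} for all i, and 0 < x₁ < x₂ < ... < xₙ < 1 (all inequalities strict). -/
import Mathlib

open Polynomial Finset

noncomputable def testPoly (S : Finset ℝ) : ℝ[X] := X * ∏ y ∈ S, (X - C y)

lemma testPoly_coeff_zero (S : Finset ℝ) : (testPoly S).coeff 0 = 0 := by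
  simp [testPoly, Polynomial.mul_coeff_zero]

lemma testPoly_natDegree (S : Finset ℝ) : (testPoly S).natDegree = S.card + 1 := by
  have h1 : (∏ y ∈ S, (X - C y) : ℝ[X]).natDegree = S.card := by
    rw [Polynomial.natDegree_prod _ _ (fun y _ => Polynomial.X_sub_C_ne_zero y)]
    simp [Polynomial.natDegree_X_sub_C]
  have h2 : (∏ y ∈ S, (X - C y) : ℝ[X]) ≠ 0 :=
    Finset.prod_ne_zero_iff.mpr fun y _ => Polynomial.X_sub_C_ne_zero y
  rw [testPoly, Polynomial.natDegree_mul Polynomial.X_ne_zero h2, h1,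
    Polynomial.natDegree_X]
  omega

lemma testPoly_eval (S : Finset ℝ) (t : ℝ) :
    (testPoly S).eval t = t * ∏ y ∈ S, (t - y) := by
  simp [testPoly, Polynomial.eval_prod]

lemma key_eval {n : ℕ} (θ : ℝ) (δ x : Fin n → ℝ)
    (hsum : ∀ k : ℕ, 1 ≤ k → k ≤ n → ∑ i, δ i * x i ^ k = θ)
    (p : ℝ[X]) (hdeg : p.natDegree ≤ n) (h0 : p.coeff 0 = 0) :
    ∑ i, δ i * p.eval (x i) = θ * p.eval 1 := by
  have hlt : p.natDegree < n + 1 := Nat.lt_succ_of_le hdeg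
  have heval : ∀ t : ℝ, p.eval t = ∑ k ∈ Finset.range (n+1), p.coeff k * t ^ k := by
    intro t; rw [Polynomial.eval_eq_sum_range' hlt]
  calc ∑ i, δ i * p.eval (x i)
      = ∑ i, ∑ k ∈ Finset.range (n+1), δ i * (p.coeff k * x i ^ k) := by
        simp_rw [heval, Finset.mul_sum]
    _ = ∑ k ∈ Finset.range (n+1), p.coeff k * ∑ i, δ i * x i ^ k := by
        rw [Finset.sum_comm]
        refine Finset.sum_congr rfl fun k _ => ?_
        rw [Finset.mul_sum]
        exact Finset.sum_congr rfl fun i _ => by ring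
    _ = ∑ k ∈ Finset.range (n+1), p.coeff k * θ := by
        refine Finset.sum_congr rfl fun k hk => ?_
        rcases Nat.eq_zero_or_pos k with h | h
        · subst h; simp [h0]
        · rw [hsum k h (Nat.lt_succ_iff.mp (Finset.mem_range.mp hk))]
    _ = θ * p.eval 1 := by
        rw [heval 1, Finset.mul_sum]
        exact Finset.sum_congr rfl fun k _ => by ring

lemma delta_sum_int {n : ℕ} (δ : Fin n → ℝ) (hδ : ∀ i, δ i = 1 ∨ δ i = -1)
    (s : Finset (Fin n)) : ∃ m : ℤ, ∑ i ∈ s, δ i = (m : ℝ) := by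
  refine ⟨∑ i ∈ s, (if δ i = 1 then 1 else -1 : ℤ), ?_⟩
  push_cast
  refine Finset.sum_congr rfl fun i _ => ?_
  rcases hδ i with h | h <;> norm_num [h]

lemma no_degenerate {n : ℕ} (θ : ℝ) (hθ0 : 0 < θ) (hθ1 : θ < 1)
    (δ x : Fin n → ℝ) (hδ : ∀ i, δ i = 1 ∨ δ i = -1)
    (hx : ∀ i, x i ∈ Set.Icc (0:ℝ) 1)
    (hsum : ∀ k : ℕ, 1 ≤ k → k ≤ n → ∑ i, δ i * x i ^ k = θ)
    (hS : (((Finset.univ.image x).erase 1).erase 0).card + 1 ≤ n) : False := by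
  set S := ((Finset.univ.image x).erase 1).erase 0 with hSdef
  have hdeg : (testPoly S).natDegree ≤ n := by rw [testPoly_natDegree]; exact hS
  have hkey := key_eval θ δ x hsum (testPoly S) hdeg (testPoly_coeff_zero S)
  have hP1 : (0:ℝ) < (testPoly S).eval 1 := by
    rw [testPoly_eval]
    rw [one_mul]
    refine Finset.prod_pos fun y hy => ?_
    have hy1 : y ≠ 1 := Finset.ne_of_mem_erase (Finset.mem_of_mem_erase hy)
    obtain ⟨j, _, hj⟩ := Finset.mem_image.mp
      (Finset.mem_of_mem_erase (Finset.mem_of_mem_erase hy))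
    have := (hx j).2
    rw [hj] at this
    have : y < 1 := lt_of_le_of_ne this hy1
    linarith
  have heachi : ∀ i, (testPoly S).eval (x i) =
      if x i = 1 then (testPoly S).eval 1 else 0 := by
    intro i
    by_cases h1 : x i = 1
    · rw [if_pos h1, h1]
    · rw [if_neg h1]
      by_cases h0 : x i = 0
      · rw [testPoly_eval, h0, zero_mul]
      · have hmem : x i ∈ S := by
          refine Finset.mem_erase.mpr ⟨h0, Finset.mem_erase.mpr ⟨h1, ?_⟩⟩
          exact Finset.mem_image_of_mem x (Finset.mem_univ i)
        rw [testPoly_eval]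
        rw [Finset.prod_eq_zero hmem (by ring), mul_zero]
  have hLHS : ∑ i, δ i * (testPoly S).eval (x i) =
      (∑ i ∈ Finset.univ.filter (fun i => x i = 1), δ i) * (testPoly S).eval 1 := by
    rw [Finset.sum_filter, Finset.sum_mul]
    refine Finset.sum_congr rfl fun i _ => ?_
    rw [heachi i]
    by_cases h : x i = 1 <;> simp [h]
  rw [hLHS] at hkey
  have hc : (∑ i ∈ Finset.univ.filter (fun i => x i = 1), δ i) = θ :=
    mul_right_cancel₀ (ne_of_gt hP1) hkey
  obtain ⟨m, hm⟩ := delta_sum_int δ hδ (Finset.univ.filter (fun i => x i = 1))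
  rw [hm] at hc
  have h1 : (0:ℤ) < m := by exact_mod_cast hc ▸ hθ0
  have h2 : m < 1 := by exact_mod_cast hc ▸ hθ1
  omega

noncomputable def testPoly2 {n : ℕ} (x : Fin n → ℝ) (T : Finset (Fin n)) : ℝ[X] :=
  X * ∏ j ∈ T, (X - C (x j))

lemma testPoly2_coeff_zero {n : ℕ} (x : Fin n → ℝ) (T : Finset (Fin n)) :
    (testPoly2 x T).coeff 0 = 0 := by
  simp [testPoly2, Polynomial.mul_coeff_zero]

lemma testPoly2_natDegree {n : ℕ} (x : Fin n → ℝ) (T : Finset (Fin n)) :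
    (testPoly2 x T).natDegree = T.card + 1 := by
  have h1 : (∏ j ∈ T, (X - C (x j)) : ℝ[X]).natDegree = T.card := by
    rw [Polynomial.natDegree_prod _ _ (fun j _ => Polynomial.X_sub_C_ne_zero (x j))]
    simp [Polynomial.natDegree_X_sub_C]
  have h2 : (∏ j ∈ T, (X - C (x j)) : ℝ[X]) ≠ 0 :=
    Finset.prod_ne_zero_iff.mpr fun j _ => Polynomial.X_sub_C_ne_zero (x j)
  rw [testPoly2, Polynomial.natDegree_mul Polynomial.X_ne_zero h2, h1,
    Polynomial.natDegree_X]
  omega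

lemma testPoly2_eval {n : ℕ} (x : Fin n → ℝ) (T : Finset (Fin n)) (t : ℝ) :
    (testPoly2 x T).eval t = t * ∏ j ∈ T, (t - x j) := by
  simp [testPoly2, Polynomial.eval_prod]

theorem stmt_12 (n : ℕ) (hn : 1 ≤ n) (θ : ℝ) (hθ0 : 0 < θ) (hθ1 : θ < 1)
    (δ x : Fin n → ℝ) (hδ : ∀ i, δ i = 1 ∨ δ i = -1)
    (hx : ∀ i, x i ∈ Set.Icc (0:ℝ) 1) (hmono : Monotone x)
    (hsum : ∀ k : ℕ, 1 ≤ k → k ≤ n → ∑ i, δ i * x i ^ k = θ) :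
    (∀ i : Fin n, δ i = (-1 : ℝ) ^ (n - 1 - (i : ℕ))) ∧
      StrictMono x ∧ ∀ i, x i ∈ Set.Ioo (0:ℝ) 1 := by
  set I := Finset.univ.image x with hI
  set S := (I.erase 1).erase 0 with hSdef
  have hScardI : S.card ≤ (I.erase 1).card := Finset.card_le_card (Finset.erase_subset _ _)
  have hIcard : I.card ≤ n := le_trans (Finset.card_image_le) (by simp)
  -- no x i = 1
  have h1 : ∀ i, x i ≠ 1 := by
    intro i hi
    have h1I : (1:ℝ) ∈ I := hi ▸ Finset.mem_image_of_mem x (Finset.mem_univ i)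
    have := Finset.card_erase_of_mem h1I
    have hIpos : 1 ≤ I.card := Finset.card_pos.mpr ⟨1, h1I⟩
    exact no_degenerate θ hθ0 hθ1 δ x hδ hx hsum (show S.card + 1 ≤ n by omega)
  -- no x i = 0
  have h0 : ∀ i, x i ≠ 0 := by
    intro i hi
    have h0I : (0:ℝ) ∈ I := hi ▸ Finset.mem_image_of_mem x (Finset.mem_univ i)
    have h0I' : (0:ℝ) ∈ I.erase 1 := Finset.mem_erase.mpr ⟨by norm_num, h0I⟩
    have hc1 : (I.erase 1).card ≤ I.card := Finset.card_le_card (Finset.erase_subset _ _)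
    have hce := Finset.card_erase_of_mem h0I'
    rw [← hSdef] at hce
    have hpos : 1 ≤ (I.erase 1).card := Finset.card_pos.mpr ⟨0, h0I'⟩
    exact no_degenerate θ hθ0 hθ1 δ x hδ hx hsum (show S.card + 1 ≤ n by omega)
  -- injectivity
  have hinj : Function.Injective x := by
    by_contra hni
    rw [Function.not_injective_iff] at hni
    obtain ⟨a, b, hab, hne⟩ := hni
    have hsub : I ⊆ Finset.image x (Finset.univ.erase b) := by
      intro y hy
      obtain ⟨j, _, hj⟩ := Finset.mem_image.mp hy
      by_cases hjb : j = b
      · exact Finset.mem_image.mpr ⟨a, Finset.mem_erase.mpr ⟨hne, Finset.mem_univ a⟩,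
          by rw [hab, ← hjb, hj]⟩
      · exact Finset.mem_image.mpr ⟨j, Finset.mem_erase.mpr ⟨hjb, Finset.mem_univ j⟩, hj⟩
    have hcard : I.card ≤ n - 1 := by
      calc I.card ≤ (Finset.image x (Finset.univ.erase b)).card := Finset.card_le_card hsub
        _ ≤ (Finset.univ.erase b).card := Finset.card_image_le
        _ = n - 1 := by rw [Finset.card_erase_of_mem (Finset.mem_univ b)]; simp
    have hc1 : (I.erase 1).card ≤ I.card := Finset.card_le_card (Finset.erase_subset _ _)
    exact no_degenerate θ hθ0 hθ1 δ x hδ hx hsum (show S.card + 1 ≤ n by omega)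
  have hIoo : ∀ i, x i ∈ Set.Ioo (0:ℝ) 1 := fun i =>
    ⟨lt_of_le_of_ne (hx i).1 (Ne.symm (h0 i)), lt_of_le_of_ne (hx i).2 (h1 i)⟩
  have hsm : StrictMono x := hmono.strictMono_of_injective hinj
  refine ⟨?_, hsm, hIoo⟩
  -- signs
  intro i
  set T := Finset.univ.erase i with hT
  have hTcard : T.card = n - 1 := by rw [hT, Finset.card_erase_of_mem (Finset.mem_univ i)]; simp
  have hdeg : (testPoly2 x T).natDegree ≤ n := by rw [testPoly2_natDegree, hTcard]; omega
  have hkey := key_eval θ δ x hsum (testPoly2 x T) hdeg (testPoly2_coeff_zero x T)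
  have hLHS : ∑ j, δ j * (testPoly2 x T).eval (x j) = δ i * (testPoly2 x T).eval (x i) := by
    refine Finset.sum_eq_single i (fun j _ hji => ?_) (fun h => absurd (Finset.mem_univ i) h)
    rw [testPoly2_eval, Finset.prod_eq_zero (Finset.mem_erase.mpr ⟨hji, Finset.mem_univ j⟩)
      (by ring), mul_zero, mul_zero]
  rw [hLHS] at hkey
  have hP1 : (0:ℝ) < (testPoly2 x T).eval 1 := by
    rw [testPoly2_eval, one_mul]
    exact Finset.prod_pos fun j _ => by linarith [(hIoo j).2]
  -- split the product at x i
  have hTsplit : T = Finset.Iio i ∪ Finset.Ioi i := by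
    ext j
    simp only [hT, Finset.mem_erase, Finset.mem_univ, and_true, Finset.mem_union,
      Finset.mem_Iio, Finset.mem_Ioi]
    exact ne_iff_lt_or_gt
  have hdisj : Disjoint (Finset.Iio i) (Finset.Ioi i) := by
    rw [Finset.disjoint_left]
    intro j hj hj'
    exact absurd (Finset.mem_Ioi.mp hj') (not_lt.mpr (le_of_lt (Finset.mem_Iio.mp hj)))
  have hevali : (testPoly2 x T).eval (x i) =
      x i * ((∏ j ∈ Finset.Iio i, (x i - x j)) * ∏ j ∈ Finset.Ioi i, (x i - x j)) := by
    rw [testPoly2_eval, hTsplit, Finset.prod_union hdisj]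
  have hA : (0:ℝ) < ∏ j ∈ Finset.Iio i, (x i - x j) :=
    Finset.prod_pos fun j hj => by linarith [hsm (Finset.mem_Iio.mp hj)]
  have hB : ∏ j ∈ Finset.Ioi i, (x i - x j) =
      (-1 : ℝ) ^ (n - 1 - (i : ℕ)) * ∏ j ∈ Finset.Ioi i, (x j - x i) := by
    rw [← Fin.card_Ioi, ← Finset.prod_const, ← Finset.prod_mul_distrib]
    exact Finset.prod_congr rfl fun j _ => by ring
  have hB' : (0:ℝ) < ∏ j ∈ Finset.Ioi i, (x j - x i) :=
    Finset.prod_pos fun j hj => by linarith [hsm (Finset.mem_Ioi.mp hj)]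
  set m := n - 1 - (i : ℕ) with hm
  have hK : (0:ℝ) < x i * ((∏ j ∈ Finset.Iio i, (x i - x j)) *
      ∏ j ∈ Finset.Ioi i, (x j - x i)) :=
    mul_pos (hIoo i).1 (mul_pos hA hB')
  have heq : δ i * (-1:ℝ)^m * (x i * ((∏ j ∈ Finset.Iio i, (x i - x j)) *
      ∏ j ∈ Finset.Ioi i, (x j - x i))) = θ * (testPoly2 x T).eval 1 := by
    rw [← hkey, hevali, hB]; ring
  have hpos : 0 < δ i * (-1:ℝ)^m := by
    have hRpos : 0 < θ * (testPoly2 x T).eval 1 := mul_pos hθ0 hP1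
    nlinarith [hK, heq]
  rcases hδ i with h | h <;> rcases Nat.even_or_odd m with hpar | hpar <;>
    simp [h, hpar.neg_one_pow] at hpos ⊢ <;> linarith
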